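/- Let F : ℝⁿ → ℝ be standard self-concordant, x ∈ ℝⁿ, d = -∇F_S(x) for some sampled gradient, ρ = dᵀ(-∇F(x)) ≥ 0, δ = √(dᵀ∇²F(x)d) > 0. Then for all 0 ≤ t < 1/δ: F(x + t·d) ≤ F(x) - [(δ + ρ)t + log(1 - δt)]. -/

import Mathlib

open Real Set Filter

theorem self_concordant_decrease (n : ℕ) (F : EuclideanSpace ℝ (Fin n) → ℝ)
    (hF : ContDiff ℝ 3 F)
    (hsc : ∀ (x h : EuclideanSpace ℝ (Fin n)) (t : ℝ),
      |iteratedDeriv 3 (fun s : ℝ => F (x + s • h)) t| ≤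
        2 * (iteratedDeriv 2 (fun s : ℝ => F (x + s • h)) t) ^ ((3 : ℝ) / 2))
    (x d : EuclideanSpace ℝ (Fin n)) (ρ δ : ℝ)
    (hρdef : ρ = -(deriv (fun s : ℝ => F (x + s • d)) 0)) (hρ : 0 ≤ ρ)
    (hδdef : δ = Real.sqrt (iteratedDeriv 2 (fun s : ℝ => F (x + s • d)) 0)) (hδ : 0 < δ) :
    ∀ t : ℝ, 0 ≤ t → t < 1 / δ →
      F (x + t • d) ≤ F x - ((δ + ρ) * t + Real.log (1 - δ * t)) := by
  intro t ht htlt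
  rcases eq_or_lt_of_le ht with h0 | h0
  · simp [← h0]
  set φ : ℝ → ℝ := fun s => F (x + s • d) with hφdef
  have hφ : ContDiff ℝ 3 φ :=
    hF.comp (contDiff_const.add (contDiff_id.smul contDiff_const))
  set A : ℝ → ℝ := iteratedDeriv 2 φ with hAdef
  have hAdiff : Differentiable ℝ A :=
    hφ.differentiable_iteratedDeriv 2 (by norm_num)
  have hAcont : Continuous A := hAdiff.continuous
  have hscφ := hsc x d
  rw [← hφdef] at hscφ
  have hsc' : ∀ s, |deriv A s| ≤ 2 * (A s) ^ ((3:ℝ)/2) := by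
    intro s
    have h3 : iteratedDeriv 3 φ = deriv A := by
      rw [hAdef, show (3:ℕ) = 2+1 from rfl, iteratedDeriv_succ]
    have := hscφ s
    rwa [h3, ← hAdef] at this
  have hA0 : 0 < A 0 := Real.sqrt_pos.mp (hδdef ▸ hδ)
  have hδA0 : Real.sqrt (A 0) = δ := hδdef.symm
  have hδinv : t < δ⁻¹ := by rwa [one_div] at htlt
  -- the derivative of (√(A ·))⁻¹ and its bound
  have hg' : ∀ s, 0 < A s → HasDerivAt (fun u => (Real.sqrt (A u))⁻¹)
      (-(1/(2*Real.sqrt (A s)) * deriv A s) / (Real.sqrt (A s))^2) s := by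
    intro s hs
    have h1 : HasDerivAt (fun u => Real.sqrt (A u)) (1/(2*Real.sqrt (A s)) * deriv A s) s :=
      (Real.hasDerivAt_sqrt (ne_of_gt hs)).comp s (hAdiff s).hasDerivAt
    exact h1.inv (Real.sqrt_ne_zero'.mpr hs)
  have hgbd : ∀ s, 0 < A s →
      |(-(1/(2*Real.sqrt (A s)) * deriv A s) / (Real.sqrt (A s))^2)| ≤ 1 := by
    intro s hs
    have hB : 0 < Real.sqrt (A s) := Real.sqrt_pos.mpr hs
    have hB2 : Real.sqrt (A s) ^ 2 = A s := Real.sq_sqrt hs.le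
    have hrpow : (A s) ^ ((3:ℝ)/2) = A s * Real.sqrt (A s) := by
      rw [show ((3:ℝ)/2) = 1 + 1/2 by norm_num, Real.rpow_add hs, Real.rpow_one,
        ← Real.sqrt_eq_rpow]
    have habs : |(-(1/(2*Real.sqrt (A s)) * deriv A s) / (Real.sqrt (A s))^2)|
        = |deriv A s| / (2 * (A s) * Real.sqrt (A s)) := by
      rw [abs_div, abs_neg, abs_mul, abs_of_nonneg (by positivity : (0:ℝ) ≤ 1/(2*Real.sqrt (A s))),
        abs_of_nonneg (by positivity : (0:ℝ) ≤ Real.sqrt (A s)^2), hB2]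
      field_simp
    rw [habs, div_le_one (by positivity)]
    calc |deriv A s| ≤ 2 * (A s) ^ ((3:ℝ)/2) := hsc' s
      _ = 2 * (A s) * Real.sqrt (A s) := by rw [hrpow]; ring
  -- key two-sided bound on (√(A ·))⁻¹ on intervals where A is positive
  have key : ∀ b : ℝ, 0 ≤ b → (∀ s ∈ Icc 0 b, 0 < A s) →
      ∀ s ∈ Icc 0 b, δ⁻¹ - s ≤ (Real.sqrt (A s))⁻¹ ∧ (Real.sqrt (A s))⁻¹ ≤ δ⁻¹ + s := by
    intro b hb hpos
    have hint : ∀ s ∈ interior (Icc (0:ℝ) b), 0 < A s := fun s hs => hpos s (interior_subset hs)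
    have hcontg : ContinuousOn (fun u => (Real.sqrt (A u))⁻¹) (Icc 0 b) :=
      ((Real.continuous_sqrt.comp hAcont).continuousOn).inv₀
        (fun s hs => Real.sqrt_ne_zero'.mpr (hpos s hs))
    have h1 : AntitoneOn (fun u => (Real.sqrt (A u))⁻¹ - u) (Icc 0 b) := by
      apply antitoneOn_of_deriv_nonpos (convex_Icc 0 b) (hcontg.sub continuousOn_id)
      · intro s hs
        exact (((hg' s (hint s hs)).sub (hasDerivAt_id s)).differentiableAt).differentiableWithinAt
      · intro s hs
        rw [((hg' s (hint s hs)).sub (hasDerivAt_id s)).deriv]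
        have := (abs_le.mp (hgbd s (hint s hs))).2
        linarith
    have h2 : MonotoneOn (fun u => (Real.sqrt (A u))⁻¹ + u) (Icc 0 b) := by
      apply monotoneOn_of_deriv_nonneg (convex_Icc 0 b) (hcontg.add continuousOn_id)
      · intro s hs
        exact (((hg' s (hint s hs)).add (hasDerivAt_id s)).differentiableAt).differentiableWithinAt
      · intro s hs
        rw [((hg' s (hint s hs)).add (hasDerivAt_id s)).deriv]
        have := (abs_le.mp (hgbd s (hint s hs))).1
        linarith
    intro s hs
    have h0mem : (0:ℝ) ∈ Icc (0:ℝ) b := ⟨le_refl 0, hb⟩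
    have e0 : (Real.sqrt (A 0))⁻¹ = δ⁻¹ := by rw [hδA0]
    constructor
    · have := h2 h0mem hs hs.1
      simp only [e0] at this
      linarith
    · have := h1 h0mem hs hs.1
      simp only [e0] at this
      linarith
  -- Step 1: A is positive on [0, t]
  have hpos : ∀ s ∈ Icc 0 t, 0 < A s := by
    by_contra hcon
    push_neg at hcon
    obtain ⟨s₀, hs₀, hs₀le⟩ := hcon
    set Z : Set ℝ := Icc 0 t ∩ {s | A s ≤ 0} with hZdef
    have hZne : Z.Nonempty := ⟨s₀, hs₀, hs₀le⟩
    have hZclosed : IsClosed Z := isClosed_Icc.inter (isClosed_le hAcont continuous_const)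
    have hbdd : BddBelow Z := ⟨0, fun z hz => hz.1.1⟩
    set T : ℝ := sInf Z with hTdef
    have hTZ : T ∈ Z := hZclosed.csInf_mem hZne hbdd
    have hTnn : 0 ≤ T := hTZ.1.1
    have hT0 : 0 < T := hTnn.lt_of_ne (fun h => absurd (h ▸ hTZ.2) (not_le.mpr hA0))
    have hposlt : ∀ s ∈ Ico 0 T, 0 < A s := by
      intro s hs
      by_contra h
      push_neg at h
      exact absurd (csInf_le hbdd ⟨⟨hs.1, hs.2.le.trans hTZ.1.2⟩, h⟩) (not_le.mpr hs.2)
    have hAbd : ∀ s ∈ Ico 0 T, ((δ⁻¹ + T)⁻¹)^2 ≤ A s := by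
      intro s hs
      have hpos' : ∀ u ∈ Icc 0 s, 0 < A u :=
        fun u hu => hposlt u ⟨hu.1, lt_of_le_of_lt hu.2 hs.2⟩
      have h2 := (key s hs.1 hpos' s ⟨hs.1, le_refl s⟩).2
      have hAs : 0 < A s := hpos' s ⟨hs.1, le_refl s⟩
      have hB : 0 < Real.sqrt (A s) := Real.sqrt_pos.mpr hAs
      have hδT : 0 < δ⁻¹ + T := by positivity
      have h3 : (Real.sqrt (A s))⁻¹ ≤ δ⁻¹ + T := h2.trans (by linarith [hs.2])
      have h4 : (δ⁻¹ + T)⁻¹ ≤ Real.sqrt (A s) := by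
        rw [← inv_inv (Real.sqrt (A s))]
        exact inv_anti₀ (by positivity) h3
      calc ((δ⁻¹ + T)⁻¹)^2 ≤ (Real.sqrt (A s))^2 := by
            apply pow_le_pow_left₀ (by positivity) h4
        _ = A s := Real.sq_sqrt hAs.le
    have hlim : ((δ⁻¹ + T)⁻¹)^2 ≤ A T := by
      have hne : (nhdsWithin T (Ico 0 T)).NeBot := by
        apply mem_closure_iff_nhdsWithin_neBot.mp
        rw [closure_Ico (ne_of_lt hT0)]
        exact ⟨hTnn, le_refl T⟩
      exact ge_of_tendsto (hAcont.continuousAt.continuousWithinAt)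
        (eventually_nhdsWithin_of_forall hAbd)
    have hc2 : (0:ℝ) < ((δ⁻¹ + T)⁻¹)^2 := by positivity
    have hAT : A T ≤ 0 := hTZ.2
    linarith
  -- Step 2: upper bound on A on [0, t]
  have hAup : ∀ s ∈ Icc 0 t, A s ≤ ((δ⁻¹ - s)⁻¹)^2 := by
    intro s hs
    have h1 := (key t ht hpos s hs).1
    have hc : 0 < δ⁻¹ - s := sub_pos.mpr (lt_of_le_of_lt hs.2 hδinv)
    have hB : 0 < Real.sqrt (A s) := Real.sqrt_pos.mpr (hpos s hs)
    have h4 : Real.sqrt (A s) ≤ (δ⁻¹ - s)⁻¹ := by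
      rw [← inv_inv (Real.sqrt (A s))]
      exact inv_anti₀ hc h1
    calc A s = (Real.sqrt (A s))^2 := (Real.sq_sqrt (hpos s hs).le).symm
      _ ≤ ((δ⁻¹ - s)⁻¹)^2 := pow_le_pow_left₀ hB.le h4 2
  -- Step 3: bound on deriv φ on [0, t]
  have hφdiff : Differentiable ℝ φ := hφ.differentiable (by norm_num)
  have hdφdiff : Differentiable ℝ (deriv φ) := by
    have h := hφ.differentiable_iteratedDeriv 1 (by norm_num)
    rwa [iteratedDeriv_one] at h
  have hφ'cont : Continuous (deriv φ) := hdφdiff.continuous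
  have hD2 : ∀ s, HasDerivAt (deriv φ) (A s) s := by
    intro s
    have hA_eq : A = deriv (deriv φ) := by
      rw [hAdef, show (2:ℕ) = 1+1 from rfl, iteratedDeriv_succ, iteratedDeriv_one]
    rw [hA_eq]
    exact (hdφdiff s).hasDerivAt
  have hcsub : ∀ s ∈ Icc 0 t, 0 < δ⁻¹ - s :=
    fun s hs => sub_pos.mpr (lt_of_le_of_lt hs.2 hδinv)
  have hinvder : ∀ s ∈ Ioo (0:ℝ) t, HasDerivAt (fun u => (δ⁻¹ - u)⁻¹)
      (-(-1) / (δ⁻¹ - s)^2) s := by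
    intro s hs
    have h1 : HasDerivAt (fun u : ℝ => δ⁻¹ - u) (-1) s := (hasDerivAt_id s).const_sub δ⁻¹
    exact h1.inv (ne_of_gt (hcsub s ⟨hs.1.le, hs.2.le⟩))
  have hφ'le : ∀ s ∈ Icc 0 t, deriv φ s ≤ -ρ - δ + (δ⁻¹ - s)⁻¹ := by
    have hP : AntitoneOn (fun s => deriv φ s - (δ⁻¹ - s)⁻¹) (Icc 0 t) := by
      apply antitoneOn_of_deriv_nonpos (convex_Icc 0 t)
      · exact (hφ'cont.continuousOn).sub
          (((continuous_const.sub continuous_id).continuousOn).inv₀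
            (fun s hs => ne_of_gt (hcsub s hs)))
      · intro s hs
        rw [interior_Icc] at hs
        exact (((hD2 s).sub (hinvder s hs)).differentiableAt).differentiableWithinAt
      · intro s hs
        rw [interior_Icc] at hs
        rw [show (fun s => deriv φ s - (δ⁻¹ - s)⁻¹) = (deriv φ - fun u => (δ⁻¹ - u)⁻¹) from rfl,
          ((hD2 s).sub (hinvder s hs)).deriv]
        have h1 := hAup s ⟨hs.1.le, hs.2.le⟩
        have hc := hcsub s ⟨hs.1.le, hs.2.le⟩
        have h2 : ((δ⁻¹ - s)⁻¹)^2 = -(-1) / (δ⁻¹ - s)^2 := by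
          rw [inv_pow]
          field_simp
        rw [h2] at h1
        linarith
    intro s hs
    have h0mem : (0:ℝ) ∈ Icc (0:ℝ) t := ⟨le_refl 0, ht⟩
    have hps := hP h0mem hs hs.1
    have e0 : deriv φ 0 = -ρ := by rw [hρdef]; ring
    simp only [e0, sub_zero, inv_inv] at hps
    linarith
  -- Step 4: conclude
  have h1δ : ∀ s ∈ Icc 0 t, 0 < 1 - δ * s := by
    intro s hs
    have hc := hcsub s hs
    have hm : 0 < δ * (δ⁻¹ - s) := by positivity
    rw [mul_sub, mul_inv_cancel₀ (ne_of_gt hδ)] at hm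
    linarith
  have hQ : AntitoneOn (fun s => φ s + (δ + ρ) * s + Real.log (1 - δ * s)) (Icc 0 t) := by
    have hder : ∀ s ∈ Ioo (0:ℝ) t,
        HasDerivAt (fun u => φ u + (δ + ρ) * u + Real.log (1 - δ * u))
          (deriv φ s + (δ + ρ) + -δ / (1 - δ * s)) s := by
      intro s hs
      have hmem : s ∈ Icc 0 t := ⟨hs.1.le, hs.2.le⟩
      have hlog : HasDerivAt (fun u => Real.log (1 - δ * u)) (-δ / (1 - δ * s)) s := by
        have h1 : HasDerivAt (fun u : ℝ => 1 - δ * u) (-δ) s := by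
          simpa using ((hasDerivAt_id s).const_mul δ).const_sub 1
        simpa [div_eq_mul_inv] using h1.log (ne_of_gt (h1δ s hmem))
      have hlin : HasDerivAt (fun u : ℝ => (δ + ρ) * u) (δ + ρ) s := by
        simpa using (hasDerivAt_id s).const_mul (δ + ρ)
      exact ((hφdiff s).hasDerivAt.add hlin).add hlog
    apply antitoneOn_of_deriv_nonpos (convex_Icc 0 t)
    · refine ((hφ.continuous.continuousOn).add
        ((continuous_const.mul continuous_id).continuousOn)).add ?_
      exact ContinuousOn.log
        ((continuous_const.sub (continuous_const.mul continuous_id)).continuousOn)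
        (fun s hs => ne_of_gt (h1δ s hs))
    · intro s hs
      rw [interior_Icc] at hs
      exact ((hder s hs).differentiableAt).differentiableWithinAt
    · intro s hs
      rw [interior_Icc] at hs
      rw [(hder s hs).deriv]
      have hmem : s ∈ Icc 0 t := ⟨hs.1.le, hs.2.le⟩
      have h1 := hφ'le s hmem
      have hc := hcsub s hmem
      have h1d := h1δ s hmem
      have heq : (δ⁻¹ - s)⁻¹ = δ / (1 - δ * s) := by
        rw [eq_div_iff (ne_of_gt h1d)]
        field_simp
      rw [heq] at h1
      have : -δ / (1 - δ * s) = -(δ / (1 - δ * s)) := by ring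
      rw [this]
      linarith
  have h0mem : (0:ℝ) ∈ Icc (0:ℝ) t := ⟨le_refl 0, ht⟩
  have htmem : t ∈ Icc (0:ℝ) t := ⟨ht, le_refl t⟩
  have hfin := hQ h0mem htmem ht
  simp only [mul_zero, add_zero, sub_zero, Real.log_one] at hfin
  have hφ0 : φ 0 = F x := by simp [hφdef]
  have hφt : φ t = F (x + t • d) := rfl
  rw [hφ0, hφt] at hfin
  linarith
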